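/- arXiv:2411.16355 — 5 statements merged into one kernel-verified Lean document; each statement's English description precedes it below -/
import Mathlib

section
/- If an execution satisfies serial consistency (for every event o of process i, the set of events serialized before o in ser_i equals the set of events visible to o), together with well-formedness (physical realizability of vis, and each ser_i a strict total order with a vis b_i → a ser_i b_i for b_i of process i), then it satisfies local visibility: a po b implies a vis b. -/
/-- Serial consistency plus well-formedness implies local visibility. -/
theorem stmt_1 {E I : Type} (pr : E → I) (po vis : E → E → Prop)
    (ser : I → E → E → Prop)
    (hpo_proc : ∀ a b, po a b → pr a = pr b)
    (hpo_irrefl : ∀ a, ¬ po a a)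
    (hpo_trans : ∀ a b c, po a b → po b c → po a c)
    (hpo_total : ∀ a b, pr a = pr b → a ≠ b → po a b ∨ po b a)
    (hser_irrefl : ∀ i a, ¬ ser i a a)
    (hser_trans : ∀ i a b c, ser i a b → ser i b c → ser i a c)
    (hser_total : ∀ i a b, a ≠ b → ser i a b ∨ ser i b a)
    (hpr : ∀ a b, Relation.TransGen (fun x y => po x y ∨ vis x y) a b → ¬ po b a)
    (hser_vis : ∀ a b, vis a b → ser (pr b) a b)
    (hserial : ∀ o x, ser (pr o) x o ↔ vis x o) :
    ∀ a b, po a b → vis a b := by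
  intro a b hab
  have hne : a ≠ b := fun h => hpo_irrefl a (h ▸ hab)
  rcases hser_total (pr b) a b hne with h | h
  · exact (hserial b a).mp h
  · have : vis b a := (hserial a b).mp (hpo_proc a b hab ▸ h)
    exact absurd hab (hpr b a (Relation.TransGen.single (Or.inr this)))
end

section
/- If a well-formed execution satisfies serial consistency, then it satisfies monotonic visibility: for all events a, b, c, if a vis b and b po c then a vis c. -/
/-- Serial consistency plus well-formedness implies monotonic visibility. -/
theorem stmt_2 {E I : Type} (pr : E → I) (po vis : E → E → Prop)
    (ser : I → E → E → Prop)
    (hpo_proc : ∀ a b, po a b → pr a = pr b)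
    (hpo_irrefl : ∀ a, ¬ po a a)
    (hpo_trans : ∀ a b c, po a b → po b c → po a c)
    (hser_irrefl : ∀ i a, ¬ ser i a a)
    (hser_trans : ∀ i a b c, ser i a b → ser i b c → ser i a c)
    (hser_total : ∀ i a b, a ≠ b → ser i a b ∨ ser i b a)
    (hpr : ∀ a b, Relation.TransGen (fun x y => po x y ∨ vis x y) a b → ¬ po b a)
    (hser_vis : ∀ a b, vis a b → ser (pr b) a b)
    (hserial : ∀ o x, ser (pr o) x o ↔ vis x o) :
    ∀ a b c, vis a b → po b c → vis a c := by
  intro a b c hab hbc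
  have hpr_bc : pr b = pr c := hpo_proc b c hbc
  -- if vis c b we get a contradiction with po b c
  have hnot : ¬ vis c b := fun h =>
    hpr c b (Relation.TransGen.single (Or.inr h)) hbc
  by_cases hac : a = c
  · exact absurd (hac ▸ hab) hnot
  · rcases hser_total (pr c) a c hac with h | h
    · exact (hserial c a).mp h
    · -- ser (pr c) c a, combine with ser (pr c) a b to get ser (pr b) c b, so vis c b
      have hserab : ser (pr c) a b := hpr_bc ▸ hser_vis a b hab
      have : ser (pr b) c b := hpr_bc ▸ hser_trans (pr c) c a b h hserab
      exact absurd ((hserial b c).mp this) hnot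
end

section
/- If an execution satisfies sequential consistency (vis is a strict total order containing po, and ser_i = vis for every process i), then it satisfies causal consistency: it satisfies causal visibility (hb ⊆ vis), causal serializations (a hb b ∧ ¬(b hb a) → a ser_i b), and serial consistency ({x | x ser_i o} = {x | x vis o} for every event o of process i). -/
/-- Sequential consistency implies causal consistency
(causal visibility, causal serializations, and serial consistency). -/
theorem stmt_7 {E I : Type} (pr : E → I) (po vis : E → E → Prop)
    (ser : I → E → E → Prop)
    (hpo_proc : ∀ a b, po a b → pr a = pr b)
    (hpo_irrefl : ∀ a, ¬ po a a)
    (hpo_trans : ∀ a b c, po a b → po b c → po a c)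
    (hpr : ∀ a b, Relation.TransGen (fun x y => po x y ∨ vis x y) a b → ¬ po b a)
    (hser_vis : ∀ a b, vis a b → ser (pr b) a b)
    -- sequential consistency: vis strict total order containing po, ser_i = vis
    (hvis_irrefl : ∀ a, ¬ vis a a)
    (hvis_trans : ∀ a b c, vis a b → vis b c → vis a c)
    (hvis_total : ∀ a b, a ≠ b → vis a b ∨ vis b a)
    (hpo_sub : ∀ a b, po a b → vis a b)
    (hser_eq : ∀ i : I, ser i = vis) :
    -- causal visibility
    (∀ a b, Relation.TransGen (fun x y => po x y ∨ vis x y) a b → vis a b) ∧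
    -- causal serializations
    (∀ (i : I) a b, Relation.TransGen (fun x y => po x y ∨ vis x y) a b →
      ¬ Relation.TransGen (fun x y => po x y ∨ vis x y) b a → ser i a b) ∧
    -- serial consistency
    (∀ o x, ser (pr o) x o ↔ vis x o) := by
  have hb_vis : ∀ a b, Relation.TransGen (fun x y => po x y ∨ vis x y) a b → vis a b := by
    intro a b h
    induction h with
    | single h => exact h.elim (hpo_sub _ _) id
    | tail _ h ih => exact hvis_trans _ _ _ ih (h.elim (hpo_sub _ _) id)
  refine ⟨hb_vis, ?_, ?_⟩
  · intro i a b h _; rw [hser_eq]; exact hb_vis _ _ h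
  · intro o x; rw [hser_eq]
end

section
/- An execution satisfies sequential consistency if and only if it satisfies serial consistency and arbitration. That is, given a well-formed execution (physical realizability and serialization of visibility hold), the conjunction of serial consistency ({x | x ser_i o} = {x | x vis o} for every event o of process i) and arbitration (all ser_i equal) is equivalent to sequential consistency (vis is a strict total order, po ⊆ vis, and ser_i = vis for all i). -/
/-- For a well-formed execution, sequential consistency is
equivalent to serial consistency plus arbitration. -/
theorem stmt_10 {E I : Type} (pr : E → I) (po vis : E → E → Prop)
    (ser : I → E → E → Prop)
    (hpo_proc : ∀ a b, po a b → pr a = pr b)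
    (hpo_irrefl : ∀ a, ¬ po a a)
    (hpo_trans : ∀ a b c, po a b → po b c → po a c)
    (hpo_total : ∀ a b, pr a = pr b → a ≠ b → po a b ∨ po b a)
    (hvis_irrefl : ∀ a, ¬ vis a a)
    (hser_irrefl : ∀ i a, ¬ ser i a a)
    (hser_trans : ∀ i a b c, ser i a b → ser i b c → ser i a c)
    (hser_total : ∀ i a b, a ≠ b → ser i a b ∨ ser i b a)
    (hpr : ∀ a b, Relation.TransGen (fun x y => po x y ∨ vis x y) a b → ¬ po b a)
    (hser_vis : ∀ a b, vis a b → ser (pr b) a b) :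
    -- serial consistency ∧ arbitration ↔ sequential consistency
    ((∀ o x, ser (pr o) x o ↔ vis x o) ∧ (∀ i j : I, ser i = ser j)) ↔
    ((∀ a b c, vis a b → vis b c → vis a c) ∧
     (∀ a b, a ≠ b → vis a b ∨ vis b a) ∧
     (∀ a b, po a b → vis a b) ∧
     (∀ i : I, ser i = vis)) := by
  constructor
  · rintro ⟨hsc, harb⟩
    have hser_eq : ∀ i : I, ser i = vis := by
      intro i
      funext x o
      have : ser i x o ↔ ser (pr o) x o := by rw [harb i (pr o)]
      exact propext (this.trans (hsc o x))
    refine ⟨?_, ?_, ?_, hser_eq⟩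
    · intro a b c hab hbc
      have := hser_trans (pr c)
      rw [hser_eq (pr c)] at this
      exact this a b c hab hbc
    · intro a b hne
      have := hser_total (pr a) a b hne
      rw [hser_eq (pr a)] at this
      exact this
    · intro a b hab
      have hne : a ≠ b := fun h => hpo_irrefl a (h ▸ hab)
      have := hser_total (pr a) a b hne
      rw [hser_eq (pr a)] at this
      rcases this with h | h
      · exact h
      · exact absurd hab (hpr b a (Relation.TransGen.single (Or.inr h)))
  · rintro ⟨htrans, htotal, hpovis, heq⟩
    constructor
    · intro o x
      rw [heq (pr o)]
    · intro i j
      rw [heq i, heq j]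
end

section
/- CLAM theorem (abstract form): Let an execution over two processes i and j consist of: an update u_i followed by queries at process i, and an update u_j followed by queries at process j, where under the partitioned visibility vis₀ (no cross-process visibility edges) all results are valid, and (u_i, u_j) is an irredundant pair (adding visibility edges from u_i to all events of j that see u_j, when u_i is serialized before u_j, breaks result validity; symmetrically for u_j before u_i). Then no visibility relation vis ⊇ vis₀ and serializations can simultaneously satisfy local visibility, monotonic visibility, closed past, arbitration, result validity, and the constraint that vis adds no information flow altering results (i.e., the queries' results are those determined by vis₀). -/
/-- CLAM theorem, abstract form: for a two-process partitioned
execution with an irredundant pair of updates, no visibility extending the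
partitioned visibility and no serializations can simultaneously satisfy local
visibility, monotonic visibility, closed past, arbitration, and result
validity. -/
theorem stmt_16 {E I : Type} (pr : E → I) (i j : I) (hij : i ≠ j)
    (po : E → E → Prop) (vis0 : E → E → Prop)
    (ResValid : (E → E → Prop) → (I → E → E → Prop) → Prop)
    (u_i u_j : E) (hui : pr u_i = i) (huj : pr u_j = j)
    -- program order relates only events of the same process
    (hpo_proc : ∀ a b, po a b → pr a = pr b)
    -- each update is followed by at least one query at its process
    (hq_i : ∃ q, po u_i q) (hq_j : ∃ q, po u_j q)
    -- partitioned visibility: no cross-process edges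
    (hpart : ∀ a b, vis0 a b → pr a = pr b)
    -- under the partitioned run all results are valid, whatever the serializations
    (hvalid0 : ∀ ser : I → E → E → Prop, ResValid vis0 ser)
    -- (u_i, u_j) is an irredundant pair: making the other update visible to all
    -- local viewers of the one serialized after it breaks result validity
    (hirr : ∀ (vis : E → E → Prop) (ser : I → E → E → Prop),
      (∀ a b, vis0 a b → vis a b) →
      ((ser j u_i u_j ∧ ∀ c, po u_j c → vis u_i c) ∨
       (ser i u_j u_i ∧ ∀ c, po u_i c → vis u_j c)) →
      ¬ ResValid vis ser) :
    ¬ ∃ (vis : E → E → Prop) (ser : I → E → E → Prop),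
      (∀ a b, vis0 a b → vis a b) ∧
      -- serializations are strict total orders
      (∀ p a, ¬ ser p a a) ∧
      (∀ p a b c, ser p a b → ser p b c → ser p a c) ∧
      (∀ p a b, a ≠ b → ser p a b ∨ ser p b a) ∧
      -- serialization of visibility
      (∀ a b, vis a b → ser (pr b) a b) ∧
      -- local visibility
      (∀ a b, po a b → vis a b) ∧
      -- monotonic visibility
      (∀ a b c, vis a b → po b c → vis a c) ∧
      -- closed past
      (∀ a b c, vis a b → ¬ vis c b → ser (pr b) a c) ∧
      -- arbitration
      (∀ p q : I, ser p = ser q) ∧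
      -- result validity
      ResValid vis ser := by
  rintro ⟨vis, ser, hext, hirrefl, htrans, htotal, hservis, hloc, hmono, hclosed, harb, hres⟩
  have huij : u_i ≠ u_j := fun h => hij (hui ▸ huj ▸ h ▸ rfl)
  have key : (ser j u_i u_j ∧ ∀ c, po u_j c → vis u_i c) ∨
      (ser i u_j u_i ∧ ∀ c, po u_i c → vis u_j c) := by
    rcases htotal j u_i u_j huij with h | h
    · left
      refine ⟨h, fun c hc => ?_⟩
      by_contra hnv
      have hvjc : vis u_j c := hloc _ _ hc
      have hprc : pr c = j := (hpo_proc _ _ hc) ▸ huj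
      have := hclosed u_j c u_i hvjc hnv
      rw [hprc] at this
      exact hirrefl j u_j (htrans j _ _ _ this h)
    · right
      have h' : ser i u_j u_i := by rw [harb i j]; exact h
      refine ⟨h', fun c hc => ?_⟩
      by_contra hnv
      have hvic : vis u_i c := hloc _ _ hc
      have hprc : pr c = i := (hpo_proc _ _ hc) ▸ hui
      have := hclosed u_i c u_j hvic hnv
      rw [hprc] at this
      exact hirrefl i u_i (htrans i _ _ _ this h')
  exact hirr vis ser hext key hres
end
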